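/- Let f be holomorphic on a domain D ⊆ ℂ with f′ nonvanishing, let N_z(t) = f′(z)(t − f(z)) / ((1/2)f″(z)(t − f(z)) + f′(z)²), and let V(z,w) = N_z(f(z+w)) for z ∈ D and w small. Then at every point (z,w) where V is defined (i.e., z ∈ D, z+w ∈ D, and the denominator defining N_z(f(z+w)) is nonzero), one has ∂_z V − ∂_w V = −1 − (1/2) S_f(z) V², where S_f = f‴/f′ − (3/2)(f″/f′)² is the classical Schwarzian derivative of f. -/

import Mathlib

/-- The Möbius map `N_z(t) = f'(z)(t - f(z)) / ((1/2) f''(z)(t - f(z)) + f'(z)^2)`. -/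
noncomputable def tamanoiN (f : ℂ → ℂ) (z t : ℂ) : ℂ :=
  deriv f z * (t - f z) /
    ((1 / 2) * iteratedDeriv 2 f z * (t - f z) + (deriv f z) ^ 2)

/-- The classical Schwarzian derivative `S_f = f'''/f' - (3/2)(f''/f')^2`. -/
noncomputable def schwarzianDeriv (f : ℂ → ℂ) (z : ℂ) : ℂ :=
  iteratedDeriv 3 f z / deriv f z - (3 / 2) * (iteratedDeriv 2 f z / deriv f z) ^ 2


lemma tamanoi_aux (a b c p u : ℂ) (ha : a ≠ 0) (hden : 1 / 2 * b * u + a ^ 2 ≠ 0) :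
    ((b * u + a * (p - a)) * (1 / 2 * b * u + a ^ 2) -
        a * u * (1 / 2 * c * u + 1 / 2 * b * (p - a) + 2 * a * b)) /
      (1 / 2 * b * u + a ^ 2) ^ 2 -
    (a * p * (1 / 2 * b * u + a ^ 2) - a * u * (1 / 2 * b * p)) /
      (1 / 2 * b * u + a ^ 2) ^ 2 =
    -1 - 1 / 2 * (c / a - 3 / 2 * (b / a) ^ 2) * (a * u / (1 / 2 * b * u + a ^ 2)) ^ 2 := by
  rw [div_sub_div_same, div_eq_iff (pow_ne_zero 2 hden), sub_mul, div_pow, div_pow,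
    ← mul_div_assoc, div_mul_cancel₀ _ (pow_ne_zero 2 hden)]
  field_simp [ha]
  ring_nf

set_option maxHeartbeats 2000000


/-- For `V(z,w) = N_z(f(z+w))` one has `∂_z V - ∂_w V = -1 - (1/2) S_f(z) V^2`. -/
theorem partial_deriv_tamanoiV (D : Set ℂ) (hD : IsOpen D) (f : ℂ → ℂ)
    (hf : DifferentiableOn ℂ f D) (hf' : ∀ z ∈ D, deriv f z ≠ 0)
    (z w : ℂ) (hz : z ∈ D) (hzw : z + w ∈ D)
    (hden : (1 / 2) * iteratedDeriv 2 f z * (f (z + w) - f z) + (deriv f z) ^ 2 ≠ 0) :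
    deriv (fun ζ => tamanoiN f ζ (f (ζ + w))) z -
        deriv (fun ω => tamanoiN f z (f (z + ω))) w =
      -1 - (1 / 2) * schwarzianDeriv f z * (tamanoiN f z (f (z + w))) ^ 2 := by
  have hA : AnalyticOnNhd ℂ f D := hf.analyticOnNhd hD
  set a := deriv f z with ha_def
  set b := iteratedDeriv 2 f z with hb_def
  set c := iteratedDeriv 3 f z with hc_def
  set p := deriv f (z + w) with hp_def
  have ha : a ≠ 0 := hf' z hz
  have h2 : iteratedDeriv 2 f = deriv (deriv f) := by
    simp [iteratedDeriv_succ, iteratedDeriv_one]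
  have h3 : iteratedDeriv 3 f = deriv (deriv (deriv f)) := by
    simp [iteratedDeriv_succ, iteratedDeriv_one]
  have hfz : HasDerivAt f a z := ((hA z hz).differentiableAt).hasDerivAt
  have hfzw : HasDerivAt f p (z + w) := ((hA _ hzw).differentiableAt).hasDerivAt
  have hd1 : HasDerivAt (deriv f) b z := by
    have := ((hA.deriv z hz).differentiableAt).hasDerivAt
    rwa [hb_def, h2]
  have hd2 : HasDerivAt (iteratedDeriv 2 f) c z := by
    have := ((hA.deriv.deriv z hz).differentiableAt).hasDerivAt
    rw [hc_def, h3]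
    rw [h2]
    exact this
  have hshift : HasDerivAt (fun ζ => f (ζ + w)) p z := by
    have := hfzw.comp z ((hasDerivAt_id z).add_const w)
    simpa [Function.comp_def] using this
  set u := f (z + w) - f z with hu_def
  -- w-derivative
  have hshiftw : HasDerivAt (fun ω => f (z + ω)) p w := by
    have := hfzw.comp w ((hasDerivAt_const w z).add (hasDerivAt_id w))
    simpa [Function.comp_def] using this
  have hNw : HasDerivAt (fun ω => a * (f (z + ω) - f z)) (a * p) w :=
    ((hshiftw.sub_const (f z)).const_mul a)
  have hDw : HasDerivAt (fun ω => (1 / 2) * b * (f (z + ω) - f z) + a ^ 2)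
      ((1 / 2) * b * p) w :=
    (((hshiftw.sub_const (f z)).const_mul ((1:ℂ) / 2 * b)).add_const (a ^ 2))
  have hVw : HasDerivAt (fun ω => tamanoiN f z (f (z + ω)))
      ((a * p * ((1 / 2) * b * u + a ^ 2) - a * u * ((1 / 2) * b * p)) /
        ((1 / 2) * b * u + a ^ 2) ^ 2) w := by
    have := hNw.div hDw (by simpa [hu_def] using hden)
    exact this
  -- z-derivative
  have hNz : HasDerivAt (fun ζ => deriv f ζ * (f (ζ + w) - f ζ))
      (b * u + a * (p - a)) z := by
    have := hd1.mul (hshift.sub hfz)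
    exact this
  have hDz : HasDerivAt
      (fun ζ => (1 / 2) * iteratedDeriv 2 f ζ * (f (ζ + w) - f ζ) + (deriv f ζ) ^ 2)
      ((1 / 2) * c * u + (1 / 2) * b * (p - a) + 2 * a * b) z := by
    have h1 : HasDerivAt (fun ζ => (1 / 2) * iteratedDeriv 2 f ζ * (f (ζ + w) - f ζ))
        ((1 / 2) * c * u + (1 / 2) * b * (p - a)) z := by
      have := ((hd2.const_mul ((1:ℂ)/2)).mul (hshift.sub hfz))
      have e : (1:ℂ)/2 * c * u + 1/2 * b * (p - a) = 1/2 * c * (f (z+w) - f z) + 1/2 * b * (p - a) := by rw [hu_def]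
      rw [e]
      exact this
    have h2' : HasDerivAt (fun ζ => (deriv f ζ) ^ 2) (2 * a * b) z := by
      have := hd1.pow 2
      have e : (2:ℂ) * a * b = 2 * a ^ (2-1) * b := by norm_num
      rw [e]; exact this
    exact h1.add h2'
  have hVz : HasDerivAt (fun ζ => tamanoiN f ζ (f (ζ + w)))
      (((b * u + a * (p - a)) * ((1 / 2) * b * u + a ^ 2) -
          a * u * ((1 / 2) * c * u + (1 / 2) * b * (p - a) + 2 * a * b)) /
        ((1 / 2) * b * u + a ^ 2) ^ 2) z := by
    have := hNz.div hDz (by simpa [hu_def] using hden)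
    exact this
  have hden' : (1 : ℂ) / 2 * b * u + a ^ 2 ≠ 0 := by simpa [hu_def] using hden
  rw [hVz.deriv, hVw.deriv]
  have key := tamanoi_aux a b c p u ha hden'
  simp only [tamanoiN, schwarzianDeriv, ← hu_def, ← ha_def, ← hb_def, ← hc_def]
  rw [div_pow] at key
  (convert key using 2; ring)
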